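/- arXiv:2308.07344 — 8 statements merged into one kernel-verified Lean document; each statement's English description precedes it below -/
import Mathlib

section
/- For fixed A > 0, the Erlang B blocking probability is strictly decreasing in the number of servers: E_{k+1}(A) < E_k(A) for all k ≥ 0. -/
open Finset

noncomputable def ErlangB (k : ℕ) (A : ℝ) : ℝ :=
  (A ^ k / (Nat.factorial k : ℝ)) / (∑ m ∈ Finset.range (k + 1), A ^ m / (Nat.factorial m : ℝ))

theorem erlangB_strict_anti_in_servers (A : ℝ) (hA : 0 < A) (k : ℕ) :
    ErlangB (k + 1) A < ErlangB k A := by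
  have ht : ∀ m : ℕ, 0 < A ^ m / (Nat.factorial m : ℝ) := fun m =>
    div_pos (pow_pos hA m) (by exact_mod_cast Nat.factorial_pos m)
  have hS : ∀ n : ℕ, 0 < ∑ m ∈ Finset.range (n + 1), A ^ m / (Nat.factorial m : ℝ) := fun n =>
    Finset.sum_pos (fun m _ => ht m) ⟨0, Finset.mem_range.mpr (Nat.succ_pos n)⟩
  unfold ErlangB
  rw [div_lt_div_iff₀ (hS (k + 1)) (hS k)]
  rw [Finset.sum_range_succ' (fun m => A ^ m / (Nat.factorial m : ℝ)) (k + 1)]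
  rw [mul_add, Finset.mul_sum, Finset.mul_sum]
  have key : ∑ i ∈ Finset.range (k + 1),
      A ^ (k + 1) / (Nat.factorial (k + 1) : ℝ) * (A ^ i / (Nat.factorial i : ℝ)) ≤
      ∑ i ∈ Finset.range (k + 1),
      A ^ k / (Nat.factorial k : ℝ) * (A ^ (i + 1) / (Nat.factorial (i + 1) : ℝ)) := by
    apply Finset.sum_le_sum
    intro i hi
    have hik : i ≤ k := Nat.lt_succ_iff.mp (Finset.mem_range.mp hi)
    rw [div_mul_div_comm, div_mul_div_comm, pow_succ, pow_succ]
    have hpow : A ^ k * A * A ^ i = A ^ k * (A ^ i * A) := by ring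
    rw [hpow]
    apply div_le_div_of_nonneg_left (by positivity) (by positivity)
    have : (Nat.factorial k : ℝ) * ((Nat.factorial i : ℝ) * (i + 1)) ≤
        (Nat.factorial k : ℝ) * (k + 1) * (Nat.factorial i : ℝ) := by
      have h1 : ((i : ℝ) + 1) ≤ (k : ℝ) + 1 := by exact_mod_cast Nat.succ_le_succ hik
      have h2 : (0:ℝ) ≤ (Nat.factorial k : ℝ) * (Nat.factorial i : ℝ) := by positivity
      nlinarith [mul_le_mul_of_nonneg_left h1 h2]
    calc (Nat.factorial k : ℝ) * (Nat.factorial (i + 1) : ℝ)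
        = (Nat.factorial k : ℝ) * ((Nat.factorial i : ℝ) * (i + 1)) := by
          rw [Nat.factorial_succ]; push_cast; ring
      _ ≤ (Nat.factorial k : ℝ) * (k + 1) * (Nat.factorial i : ℝ) := this
      _ = (Nat.factorial (k + 1) : ℝ) * (Nat.factorial i : ℝ) := by
          rw [Nat.factorial_succ]; push_cast; ring
  have hextra : 0 < A ^ k / (Nat.factorial k : ℝ) * (A ^ 0 / (Nat.factorial 0 : ℝ)) :=
    mul_pos (ht k) (ht 0)
  linarith
end

section
/- For fixed k ≥ 1, the carried-load-loss function A ↦ A·E_k(A) is strictly increasing on (0,∞). -/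
open Finset

theorem lostTraffic_strictMonoOn (k : ℕ) (hk : 1 ≤ k) :
    StrictMonoOn (fun A : ℝ => A * ErlangB k A) (Set.Ioi 0) := by
  intro x hx y hy hxy
  simp only [Set.mem_Ioi] at hx hy
  have hSx : 0 < ∑ m ∈ Finset.range (k + 1), x ^ m / (Nat.factorial m : ℝ) := by
    apply Finset.sum_pos
    · intro m _
      positivity
    · exact Finset.nonempty_range_iff.mpr (Nat.succ_ne_zero k)
  have hSy : 0 < ∑ m ∈ Finset.range (k + 1), y ^ m / (Nat.factorial m : ℝ) := by
    apply Finset.sum_pos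
    · intro m _
      positivity
    · exact Finset.nonempty_range_iff.mpr (Nat.succ_ne_zero k)
  simp only [ErlangB]
  rw [mul_div_assoc', mul_div_assoc', mul_div_assoc', mul_div_assoc', div_lt_div_iff₀ hSx hSy]
  rw [Finset.mul_sum, Finset.mul_sum]
  apply Finset.sum_lt_sum_of_nonempty (Finset.nonempty_range_iff.mpr (Nat.succ_ne_zero k))
  intro m hm
  rw [Finset.mem_range, Nat.lt_succ_iff] at hm
  have key : x ^ (k + 1) * y ^ m < y ^ (k + 1) * x ^ m := by
    have e1 : x ^ (k + 1) = x ^ m * x ^ (k + 1 - m) := by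
      rw [← pow_add]; congr 1; omega
    have e2 : y ^ (k + 1) = y ^ m * y ^ (k + 1 - m) := by
      rw [← pow_add]; congr 1; omega
    have h := mul_lt_mul_of_pos_left
      (pow_lt_pow_left₀ hxy hx.le (by omega : k + 1 - m ≠ 0))
      (show (0:ℝ) < x ^ m * y ^ m by positivity)
    calc x ^ (k + 1) * y ^ m = x ^ m * y ^ m * x ^ (k + 1 - m) := by rw [e1]; ring
      _ < x ^ m * y ^ m * y ^ (k + 1 - m) := h
      _ = y ^ (k + 1) * x ^ m := by rw [e2]; ring
  have hfk : (0:ℝ) < (Nat.factorial k : ℝ) := by positivity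
  have hfm : (0:ℝ) < (Nat.factorial m : ℝ) := by positivity
  have e3 : x * x ^ k / (Nat.factorial k : ℝ) * (y ^ m / (Nat.factorial m : ℝ))
      = x ^ (k + 1) * y ^ m / ((Nat.factorial k : ℝ) * (Nat.factorial m : ℝ)) := by
    rw [pow_succ]; ring
  have e4 : y * y ^ k / (Nat.factorial k : ℝ) * (x ^ m / (Nat.factorial m : ℝ))
      = y ^ (k + 1) * x ^ m / ((Nat.factorial k : ℝ) * (Nat.factorial m : ℝ)) := by
    rw [pow_succ]; ring
  rw [e3, e4]
  gcongr
end

section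
/- For fixed k ≥ 1, the Erlang B function A ↦ E_k(A) is strictly increasing on (0,∞). -/
open Finset

theorem erlangB_strictMonoOn (k : ℕ) (hk : 1 ≤ k) :
    StrictMonoOn (fun A : ℝ => ErlangB k A) (Set.Ioi 0) := by
  intro a ha b hb hab
  simp only [Set.mem_Ioi] at ha hb
  simp only [ErlangB]
  have hSa : 0 < ∑ m ∈ Finset.range (k + 1), a ^ m / (Nat.factorial m : ℝ) :=
    Finset.sum_pos (fun m _ => by positivity) ⟨0, Finset.mem_range.2 (Nat.succ_pos k)⟩
  have hSb : 0 < ∑ m ∈ Finset.range (k + 1), b ^ m / (Nat.factorial m : ℝ) :=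
    Finset.sum_pos (fun m _ => by positivity) ⟨0, Finset.mem_range.2 (Nat.succ_pos k)⟩
  rw [div_lt_div_iff₀ hSa hSb, Finset.mul_sum, Finset.mul_sum]
  apply Finset.sum_lt_sum
  · intro m hm
    have hmk : m ≤ k := Nat.lt_succ_iff.mp (Finset.mem_range.mp hm)
    have h1 : a ^ k * b ^ m ≤ b ^ k * a ^ m := by
      calc a ^ k * b ^ m = a ^ m * a ^ (k - m) * b ^ m := by
            rw [← pow_add, Nat.add_sub_cancel' hmk]
        _ ≤ a ^ m * b ^ (k - m) * b ^ m := by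
            have := pow_le_pow_left₀ ha.le hab.le (k - m)
            have h2 : (0:ℝ) ≤ a ^ m := by positivity
            have h3 : (0:ℝ) ≤ b ^ m := by positivity
            exact mul_le_mul_of_nonneg_right (mul_le_mul_of_nonneg_left this h2) h3
        _ = b ^ k * a ^ m := by
            rw [mul_assoc, ← pow_add, Nat.sub_add_cancel hmk, mul_comm]
    rw [div_mul_div_comm, div_mul_div_comm, div_le_div_iff₀ (by positivity) (by positivity)]
    have hfk : (0:ℝ) < (Nat.factorial k : ℝ) := Nat.cast_pos.2 (Nat.factorial_pos k)
    have hfm : (0:ℝ) < (Nat.factorial m : ℝ) := Nat.cast_pos.2 (Nat.factorial_pos m)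
    nlinarith [mul_pos hfk hfm]
  · refine ⟨0, Finset.mem_range.2 (Nat.succ_pos k), ?_⟩
    simp only [pow_zero, Nat.factorial_zero, Nat.cast_one, div_one, mul_one]
    have : a ^ k < b ^ k := pow_lt_pow_left₀ hab ha.le (by omega)
    have hkpos : (0:ℝ) < (Nat.factorial k : ℝ) := Nat.cast_pos.2 (Nat.factorial_pos k)
    exact (div_lt_div_iff_of_pos_right hkpos).2 this
end

section
/- In a preemptive-priority loss system with p classes of offered traffic A_1, ..., A_p > 0, the lost traffic of class i defined by A_L(i) = Â_i·E_k(Â_i) − Â_{i−1}·E_k(Â_{i−1}) (where Â_i = A_1 + ... + A_i and Â_0 = 0) is strictly positive for every i with 1 ≤ i ≤ p and k ≥ 1. -/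
open Finset

lemma S_pos (k : ℕ) {x : ℝ} (hx : 0 ≤ x) :
    0 < ∑ m ∈ Finset.range (k + 1), x ^ m / (Nat.factorial m : ℝ) := by
  apply Finset.sum_pos' (fun m _ => by positivity)
  exact ⟨0, Finset.mem_range.mpr (Nat.succ_pos k), by simp⟩

lemma key (k : ℕ) (hk : 1 ≤ k) {a b : ℝ} (ha : 0 ≤ a) (hab : a < b) :
    a * ErlangB k a < b * ErlangB k b := by
  have hb : 0 < b := lt_of_le_of_lt ha hab
  have hSa := S_pos k ha
  have hSb := S_pos k hb.le
  rcases eq_or_lt_of_le ha with h0 | ha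
  · rw [← h0]
    simp only [zero_mul]
    have : 0 < ErlangB k b := by
      unfold ErlangB
      positivity
    positivity
  · have hform : ∀ x : ℝ, 0 < x → x * ErlangB k x =
        x ^ (k + 1) / (Nat.factorial k : ℝ) /
          (∑ m ∈ Finset.range (k + 1), x ^ m / (Nat.factorial m : ℝ)) := by
      intro x hx
      unfold ErlangB
      field_simp
      ring
    rw [hform a ha, hform b hb]
    rw [div_lt_div_iff₀ hSa hSb]
    have hfac : (0 : ℝ) < (Nat.factorial k : ℝ) := by positivity
    rw [div_mul_eq_mul_div, div_mul_eq_mul_div, div_lt_div_iff₀ hfac hfac]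
    have hmain : a ^ (k + 1) * ∑ m ∈ Finset.range (k + 1), b ^ m / (Nat.factorial m : ℝ)
        < b ^ (k + 1) * ∑ m ∈ Finset.range (k + 1), a ^ m / (Nat.factorial m : ℝ) := by
      rw [Finset.mul_sum, Finset.mul_sum]
      apply Finset.sum_lt_sum_of_nonempty ⟨0, Finset.mem_range.mpr (Nat.succ_pos k)⟩
      intro m hm
      have hm' : m ≤ k := Nat.lt_succ_iff.mp (Finset.mem_range.mp hm)
      rw [div_eq_mul_inv, div_eq_mul_inv, ← mul_assoc, ← mul_assoc]
      apply mul_lt_mul_of_pos_right _ (by positivity)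
      have hsplit : k + 1 = m + (k + 1 - m) := by omega
      rw [hsplit, pow_add, pow_add]
      have h1 : a ^ (k + 1 - m) < b ^ (k + 1 - m) :=
        pow_lt_pow_left₀ hab ha.le (by omega)
      calc a ^ m * a ^ (k + 1 - m) * b ^ m
          < a ^ m * b ^ (k + 1 - m) * b ^ m := by
            apply mul_lt_mul_of_pos_right _ (by positivity)
            exact mul_lt_mul_of_pos_left h1 (by positivity)
        _ = b ^ m * b ^ (k + 1 - m) * a ^ m := by ring
    nlinarith [hmain, hfac]

theorem lostTraffic_pos (p k : ℕ) (hk : 1 ≤ k) (A : ℕ → ℝ)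
    (hA : ∀ i, 1 ≤ i → i ≤ p → 0 < A i) :
    ∀ i, 1 ≤ i → i ≤ p →
      0 < (∑ j ∈ Finset.Icc 1 i, A j) * ErlangB k (∑ j ∈ Finset.Icc 1 i, A j)
          - (∑ j ∈ Finset.Icc 1 (i - 1), A j) * ErlangB k (∑ j ∈ Finset.Icc 1 (i - 1), A j) := by
  intro i hi1 hip
  have hnn : 0 ≤ ∑ j ∈ Finset.Icc 1 (i - 1), A j := by
    apply Finset.sum_nonneg
    intro j hj
    have := Finset.mem_Icc.mp hj
    exact (hA j this.1 (by omega)).le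
  have hlt : (∑ j ∈ Finset.Icc 1 (i - 1), A j) < ∑ j ∈ Finset.Icc 1 i, A j := by
    have h := Finset.sum_Icc_succ_top (by omega : 1 ≤ i - 1 + 1) A
    rw [show i - 1 + 1 = i from by omega] at h
    rw [h]
    linarith [hA i hi1 hip]
  linarith [key k hk hnn hlt]
end

section
/- For a p-class preemptive priority loss system with k servers, the blocking probability P_b(i) = [Â_i·E_k(Â_i) − Â_{i−1}·E_k(Â_{i−1})] / A_i of each class i satisfies 0 < P_b(i) < 1 whenever all A_j > 0 and k ≥ 1. -/
open Finset

/-- S: denominator of Erlang B. -/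
noncomputable def ErlS (k : ℕ) (A : ℝ) : ℝ :=
  ∑ m ∈ Finset.range (k + 1), A ^ m / (Nat.factorial m : ℝ)

/-- T: numerator of `A - A * ErlangB k A` after clearing denominators. -/
noncomputable def ErlT (k : ℕ) (A : ℝ) : ℝ :=
  ∑ m ∈ Finset.range (k + 1), (m : ℝ) * A ^ m / (Nat.factorial m : ℝ)

lemma ErlS_pos (k : ℕ) {A : ℝ} (hA : 0 ≤ A) : 0 < ErlS k A := by
  apply Finset.sum_pos'
  · intro m _
    positivity
  · exact ⟨0, Finset.mem_range.2 (Nat.succ_pos k), by norm_num⟩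

lemma pow_cross {x y : ℝ} (hx : 0 ≤ x) (hxy : x ≤ y) {m n : ℕ} (h : n ≤ m) :
    x ^ m * y ^ n ≤ y ^ m * x ^ n := by
  have e1 : x ^ m = x ^ n * x ^ (m - n) := by rw [← pow_add]; congr 1; omega
  have e2 : y ^ m = y ^ n * y ^ (m - n) := by rw [← pow_add]; congr 1; omega
  rw [e1, e2]
  calc x ^ n * x ^ (m - n) * y ^ n = (x ^ n * y ^ n) * x ^ (m - n) := by ring
    _ ≤ (x ^ n * y ^ n) * y ^ (m - n) :=
        mul_le_mul_of_nonneg_left (pow_le_pow_left₀ hx hxy _)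
          (mul_nonneg (pow_nonneg hx n) (pow_nonneg (hx.trans hxy) n))
    _ = y ^ n * y ^ (m - n) * x ^ n := by ring

lemma erlang_mul_eq (k : ℕ) {A : ℝ} (hA : 0 ≤ A) :
    A * ErlangB k A = (A ^ (k + 1) / (Nat.factorial k : ℝ)) / ErlS k A := by
  have hS : ErlS k A ≠ 0 := (ErlS_pos k hA).ne'
  have hf : (Nat.factorial k : ℝ) ≠ 0 := by positivity
  show A * ((A ^ k / (Nat.factorial k : ℝ)) / ErlS k A) = _
  rw [pow_succ]
  field_simp

/-- Strict monotonicity of `A ↦ A * ErlangB k A` on `[0, ∞)`. -/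
lemma mul_erlang_strictMono (k : ℕ) {x y : ℝ} (hx : 0 ≤ x) (hxy : x < y) :
    x * ErlangB k x < y * ErlangB k y := by
  have hy : 0 ≤ y := hx.trans hxy.le
  have hSx := ErlS_pos k hx
  have hSy := ErlS_pos k hy
  rw [erlang_mul_eq k hx, erlang_mul_eq k hy, div_lt_div_iff₀ hSx hSy]
  have hf : (0 : ℝ) < (Nat.factorial k : ℝ) := by positivity
  have key : x ^ (k + 1) * ErlS k y < y ^ (k + 1) * ErlS k x := by
    unfold ErlS
    rw [Finset.mul_sum, Finset.mul_sum]
    apply Finset.sum_lt_sum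
    · intro m hm
      have hm' : m ≤ k + 1 := le_of_lt (Finset.mem_range.1 hm)
      have h1 : x ^ (k + 1) * y ^ m ≤ y ^ (k + 1) * x ^ m := pow_cross hx hxy.le hm'
      have hfm : (0 : ℝ) < (Nat.factorial m : ℝ) := by positivity
      rw [mul_div_assoc', mul_div_assoc']
      exact div_le_div_of_nonneg_right h1 hfm.le
    · exact ⟨0, Finset.mem_range.2 (Nat.succ_pos k), by
        simp only [pow_zero, Nat.factorial_zero, Nat.cast_one, div_one, mul_one]
        exact pow_lt_pow_left₀ hxy hx (Nat.succ_ne_zero k)⟩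
  calc x ^ (k + 1) / (Nat.factorial k : ℝ) * ErlS k y
      = (x ^ (k + 1) * ErlS k y) / (Nat.factorial k : ℝ) := by ring
    _ < (y ^ (k + 1) * ErlS k x) / (Nat.factorial k : ℝ) := by
        exact (div_lt_div_iff_of_pos_right hf).2 key
    _ = y ^ (k + 1) / (Nat.factorial k : ℝ) * ErlS k x := by ring

lemma ErlT_eq (k : ℕ) (A : ℝ) :
    ErlT k A = A * ErlS k A - A ^ (k + 1) / (Nat.factorial k : ℝ) := by
  unfold ErlT ErlS
  rw [Finset.mul_sum]
  rw [Finset.sum_range_succ' (fun m => (m : ℝ) * A ^ m / (Nat.factorial m : ℝ))]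
  rw [Finset.sum_range_succ (fun m => A * (A ^ m / (Nat.factorial m : ℝ)))]
  have hterm : ∀ m ∈ Finset.range k,
      ((m + 1 : ℕ) : ℝ) * A ^ (m + 1) / (Nat.factorial (m + 1) : ℝ)
        = A * (A ^ m / (Nat.factorial m : ℝ)) := by
    intro m _
    rw [Nat.factorial_succ]
    push_cast
    have hm : ((m : ℝ) + 1) ≠ 0 := by positivity
    have hfm : (Nat.factorial m : ℝ) ≠ 0 := by positivity
    field_simp
    ring
  rw [Finset.sum_congr rfl hterm]
  simp only [Nat.cast_zero, zero_mul, pow_succ]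
  ring

lemma one_sub_erlang_eq (k : ℕ) {A : ℝ} (hA : 0 ≤ A) :
    A - A * ErlangB k A = ErlT k A / ErlS k A := by
  have hS : ErlS k A ≠ 0 := (ErlS_pos k hA).ne'
  rw [erlang_mul_eq k hA, ErlT_eq]
  field_simp

/-- Cross inequality for T/S: the mean of the tilted distribution is increasing. -/
lemma cross_TS (k : ℕ) (hk : 1 ≤ k) {x y : ℝ} (hx : 0 ≤ x) (hxy : x < y) :
    ErlT k x * ErlS k y < ErlT k y * ErlS k x := by
  have hy : 0 ≤ y := hx.trans hxy.le
  set R := Finset.range (k + 1) with hR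
  have e1 : ErlT k y * ErlS k x
      = ∑ m ∈ R, ∑ n ∈ R, (m : ℝ) * y ^ m * x ^ n
          / ((Nat.factorial m : ℝ) * (Nat.factorial n : ℝ)) := by
    unfold ErlT ErlS
    rw [Finset.sum_mul_sum]
    exact Finset.sum_congr rfl fun m _ => Finset.sum_congr rfl fun n _ => by ring
  have e1' : ErlT k y * ErlS k x
      = ∑ m ∈ R, ∑ n ∈ R, (n : ℝ) * y ^ n * x ^ m
          / ((Nat.factorial m : ℝ) * (Nat.factorial n : ℝ)) := by
    rw [e1, Finset.sum_comm]
    exact Finset.sum_congr rfl fun m _ => Finset.sum_congr rfl fun n _ => by ring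
  have e2 : ErlT k x * ErlS k y
      = ∑ m ∈ R, ∑ n ∈ R, (m : ℝ) * x ^ m * y ^ n
          / ((Nat.factorial m : ℝ) * (Nat.factorial n : ℝ)) := by
    unfold ErlT ErlS
    rw [Finset.sum_mul_sum]
    exact Finset.sum_congr rfl fun m _ => Finset.sum_congr rfl fun n _ => by ring
  have e2' : ErlT k x * ErlS k y
      = ∑ m ∈ R, ∑ n ∈ R, (n : ℝ) * x ^ n * y ^ m
          / ((Nat.factorial m : ℝ) * (Nat.factorial n : ℝ)) := by
    rw [e2, Finset.sum_comm]
    exact Finset.sum_congr rfl fun m _ => Finset.sum_congr rfl fun n _ => by ring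
  have hcomb :
      (∑ m ∈ R, ∑ n ∈ R, (m : ℝ) * y ^ m * x ^ n
          / ((Nat.factorial m : ℝ) * (Nat.factorial n : ℝ)))
      + (∑ m ∈ R, ∑ n ∈ R, (n : ℝ) * y ^ n * x ^ m
          / ((Nat.factorial m : ℝ) * (Nat.factorial n : ℝ)))
      - (∑ m ∈ R, ∑ n ∈ R, (m : ℝ) * x ^ m * y ^ n
          / ((Nat.factorial m : ℝ) * (Nat.factorial n : ℝ)))
      - (∑ m ∈ R, ∑ n ∈ R, (n : ℝ) * x ^ n * y ^ m
          / ((Nat.factorial m : ℝ) * (Nat.factorial n : ℝ)))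
      = ∑ m ∈ R, ∑ n ∈ R, ((m : ℝ) - n) * (y ^ m * x ^ n - x ^ m * y ^ n)
          / ((Nat.factorial m : ℝ) * (Nat.factorial n : ℝ)) := by
    rw [← Finset.sum_add_distrib, ← Finset.sum_sub_distrib, ← Finset.sum_sub_distrib]
    refine Finset.sum_congr rfl fun m _ => ?_
    rw [← Finset.sum_add_distrib, ← Finset.sum_sub_distrib, ← Finset.sum_sub_distrib]
    exact Finset.sum_congr rfl fun n _ => by ring
  have hbig : 0 < ∑ m ∈ R, ∑ n ∈ R, ((m : ℝ) - n) * (y ^ m * x ^ n - x ^ m * y ^ n)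
      / ((Nat.factorial m : ℝ) * (Nat.factorial n : ℝ)) := by
    have hterm : ∀ m n : ℕ, 0 ≤ ((m : ℝ) - n) * (y ^ m * x ^ n - x ^ m * y ^ n)
        / ((Nat.factorial m : ℝ) * (Nat.factorial n : ℝ)) := by
      intro m n
      apply div_nonneg _ (by positivity)
      rcases le_total n m with h | h
      · apply mul_nonneg
        · simp only [sub_nonneg]; exact_mod_cast Nat.cast_le.2 h
        · exact sub_nonneg.2 (pow_cross hx hxy.le h)
      · have h1 : ((m : ℝ) - n) ≤ 0 := by
          simp only [sub_nonpos]; exact_mod_cast Nat.cast_le.2 h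
        have hc := pow_cross hx hxy.le h
        have h2 : y ^ m * x ^ n - x ^ m * y ^ n ≤ 0 := by
          rw [mul_comm (y ^ m), mul_comm (x ^ m)]; linarith
        rw [← neg_mul_neg]
        exact mul_nonneg (by linarith) (by linarith)
    apply Finset.sum_pos'
    · intro m _
      exact Finset.sum_nonneg fun n _ => hterm m n
    · refine ⟨1, Finset.mem_range.2 (by omega), ?_⟩
      apply Finset.sum_pos'
      · intro n _
        exact hterm 1 n
      · refine ⟨0, Finset.mem_range.2 (Nat.succ_pos k), ?_⟩
        simp only [Nat.cast_one, Nat.cast_zero, sub_zero, pow_one, pow_zero,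
          Nat.factorial_one, Nat.factorial_zero, mul_one, one_mul]
        simp only [div_one]
        linarith
  have hfinal : 0 < 2 * (ErlT k y * ErlS k x - ErlT k x * ErlS k y) := by
    have : 2 * (ErlT k y * ErlS k x - ErlT k x * ErlS k y)
        = ∑ m ∈ R, ∑ n ∈ R, ((m : ℝ) - n) * (y ^ m * x ^ n - x ^ m * y ^ n)
            / ((Nat.factorial m : ℝ) * (Nat.factorial n : ℝ)) := by
      rw [← hcomb]
      linear_combination e1 + e1' - e2 - e2'
    rw [this]; exact hbig
  linarith

/-- Strict monotonicity of `A ↦ A - A * ErlangB k A` on `[0, ∞)`. -/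
lemma sub_mul_erlang_strictMono (k : ℕ) (hk : 1 ≤ k) {x y : ℝ} (hx : 0 ≤ x) (hxy : x < y) :
    x - x * ErlangB k x < y - y * ErlangB k y := by
  have hy : 0 ≤ y := hx.trans hxy.le
  have hSx := ErlS_pos k hx
  have hSy := ErlS_pos k hy
  rw [one_sub_erlang_eq k hx, one_sub_erlang_eq k hy, div_lt_div_iff₀ hSx hSy]
  exact cross_TS k hk hx hxy

theorem blockingProb_pos_lt_one (p k : ℕ) (hk : 1 ≤ k) (A : ℕ → ℝ)
    (hA : ∀ j, 1 ≤ j → j ≤ p → 0 < A j) (i : ℕ) (hi1 : 1 ≤ i) (hip : i ≤ p) :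
    0 < ((∑ j ∈ Finset.Icc 1 i, A j) * ErlangB k (∑ j ∈ Finset.Icc 1 i, A j)
          - (∑ j ∈ Finset.Icc 1 (i - 1), A j) * ErlangB k (∑ j ∈ Finset.Icc 1 (i - 1), A j)) / A i ∧
    ((∑ j ∈ Finset.Icc 1 i, A j) * ErlangB k (∑ j ∈ Finset.Icc 1 i, A j)
          - (∑ j ∈ Finset.Icc 1 (i - 1), A j) * ErlangB k (∑ j ∈ Finset.Icc 1 (i - 1), A j)) / A i < 1 := by
  set x := ∑ j ∈ Finset.Icc 1 (i - 1), A j with hxdef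
  set y := ∑ j ∈ Finset.Icc 1 i, A j with hydef
  have hAi : 0 < A i := hA i hi1 hip
  have hx : 0 ≤ x := by
    apply Finset.sum_nonneg
    intro j hj
    have h1 := (Finset.mem_Icc.1 hj).1
    have h2 := (Finset.mem_Icc.1 hj).2
    exact (hA j h1 (by omega)).le
  have hyx : y = x + A i := by
    rw [hxdef, hydef]
    conv_lhs => rw [show i = (i - 1) + 1 from by omega]
    rw [Finset.sum_Icc_succ_top (by omega : 1 ≤ i - 1 + 1)]
    rw [show i - 1 + 1 = i from by omega]
  have hxy : x < y := by rw [hyx]; linarith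
  have h1 : 0 < y * ErlangB k y - x * ErlangB k x :=
    sub_pos.2 (mul_erlang_strictMono k hx hxy)
  have h2 : y * ErlangB k y - x * ErlangB k x < A i := by
    have := sub_mul_erlang_strictMono k hk hx hxy
    rw [hyx] at this ⊢
    linarith
  constructor
  · exact div_pos h1 hAi
  · rw [div_lt_one hAi]; exact h2
end

section
/- In the 2-server, 2-priority preemptive loss system at steady state, the probability that both servers are busy equals the Erlang B value for the combined load: π_{2,0} + π_{1,1} + π_{0,2} = ((A_1+A_2)²/2) / (1 + (A_1+A_2) + (A_1+A_2)²/2), where A_n = λ_n/μ. -/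
theorem two_server_all_busy (lam1 lam2 μ : ℝ) (hlam1 : 0 < lam1) (hlam2 : 0 < lam2) (hμ : 0 < μ)
    (π00 π01 π02 π10 π11 π20 : ℝ)
    (hnn : 0 ≤ π00 ∧ 0 ≤ π01 ∧ 0 ≤ π02 ∧ 0 ≤ π10 ∧ 0 ≤ π11 ∧ 0 ≤ π20)
    (e1 : π00 * (lam1 + lam2) = π10 * μ + π01 * μ)
    (e2 : π01 * (lam1 + lam2 + μ) = π02 * (2 * μ) + π11 * μ + π00 * lam2)
    (e3 : π02 * (lam1 + 2 * μ) = π01 * lam2)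
    (e4 : π11 * (lam1 + μ) = π10 * lam2 + π02 * lam1)
    (e5 : π10 * (lam1 + lam2 + μ) = π11 * μ + π20 * (2 * μ) + π00 * lam1)
    (e6 : π20 * (2 * μ) = π11 * lam1 + π10 * lam1)
    (e7 : π20 + π10 + π00 + π11 + π01 + π02 = 1) :
    π20 + π11 + π02 =
      ((lam1 / μ + lam2 / μ) ^ 2 / 2) /
        (1 + (lam1 / μ + lam2 / μ) + (lam1 / μ + lam2 / μ) ^ 2 / 2) := by
  have hμ' : μ ≠ 0 := ne_of_gt hμ
  have key : (π20 + π11 + π02) *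
      ((lam1 + lam2) ^ 2 + 2 * μ * (lam1 + lam2) + 2 * μ ^ 2) = (lam1 + lam2) ^ 2 := by
    linear_combination ((lam1 + lam2) ^ 2) * e7 - (μ + (lam1 + lam2)) * (e2 + e5)
      - (2 * (lam1 + lam2) + μ) * e1
  have hD : (0:ℝ) < (lam1 + lam2) ^ 2 + 2 * μ * (lam1 + lam2) + 2 * μ ^ 2 := by positivity
  have hD2 : (0:ℝ) < 1 + (lam1 / μ + lam2 / μ) + (lam1 / μ + lam2 / μ) ^ 2 / 2 := by positivity
  field_simp
  linear_combination key
end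

section
/- In the 2-server, 2-priority preemptive loss system, the class-2 blocking probability defined by P_b(2) = (π_{2,0}+π_{1,1}+π_{0,2}) + (λ_1/λ_2)(π_{1,1}+π_{0,2}) equals ((A_1+A_2)E_2(A_1+A_2) − A_1E_2(A_1))/A_2, where A_n = λ_n/μ and E_2 is the Erlang B formula with 2 servers. -/
noncomputable def E2 (A : ℝ) : ℝ := (A ^ 2 / 2) / (1 + A + A ^ 2 / 2)

theorem two_server_class2_blocking (lam1 lam2 μ : ℝ) (hlam1 : 0 < lam1) (hlam2 : 0 < lam2) (hμ : 0 < μ)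
    (π00 π01 π02 π10 π11 π20 : ℝ)
    (hnn : 0 ≤ π00 ∧ 0 ≤ π01 ∧ 0 ≤ π02 ∧ 0 ≤ π10 ∧ 0 ≤ π11 ∧ 0 ≤ π20)
    (e1 : π00 * (lam1 + lam2) = π10 * μ + π01 * μ)
    (e2 : π01 * (lam1 + lam2 + μ) = π02 * (2 * μ) + π11 * μ + π00 * lam2)
    (e3 : π02 * (lam1 + 2 * μ) = π01 * lam2)
    (e4 : π11 * (lam1 + μ) = π10 * lam2 + π02 * lam1)
    (e5 : π10 * (lam1 + lam2 + μ) = π11 * μ + π20 * (2 * μ) + π00 * lam1)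
    (e6 : π20 * (2 * μ) = π11 * lam1 + π10 * lam1)
    (e7 : π20 + π10 + π00 + π11 + π01 + π02 = 1) :
    (π20 + π11 + π02) + (lam1 / lam2) * (π11 + π02) =
      ((lam1 / μ + lam2 / μ) * E2 (lam1 / μ + lam2 / μ) - (lam1 / μ) * E2 (lam1 / μ)) / (lam2 / μ) := by
  have hμ' : μ ≠ 0 := ne_of_gt hμ
  have h1 : μ * (π10 + π01) = (lam1 + lam2) * π00 := by linarith
  have h2 : 2 * μ * (π20 + π11 + π02) = (lam1 + lam2) * (π10 + π01) := by
    linear_combination -e2 - e5 - e1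
  have h3 : μ * (π10 + π11) = lam1 * (π00 + π01 + π02) := by
    linear_combination -e1 - e2 - e3
  have h4 : 2 * μ * π20 = lam1 * (π10 + π11) := by linarith
  have hDL : (0:ℝ) < 2 * μ ^ 2 + 2 * μ * (lam1 + lam2) + (lam1 + lam2) ^ 2 := by positivity
  have hD1 : (0:ℝ) < 2 * μ ^ 2 + 2 * μ * lam1 + lam1 ^ 2 := by positivity
  have hS : (π20 + π11 + π02) * (2 * μ ^ 2 + 2 * μ * (lam1 + lam2) + (lam1 + lam2) ^ 2)
      = (lam1 + lam2) ^ 2 := by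
    linear_combination (μ + (lam1 + lam2)) * h2 + (lam1 + lam2) * h1 + (lam1 + lam2) ^ 2 * e7
  have hP : π20 * (2 * μ ^ 2 + 2 * μ * lam1 + lam1 ^ 2) = lam1 ^ 2 := by
    linear_combination (μ + lam1) * h4 + lam1 * h3 + lam1 ^ 2 * e7
  have hSval : π20 + π11 + π02
      = (lam1 + lam2) ^ 2 / (2 * μ ^ 2 + 2 * μ * (lam1 + lam2) + (lam1 + lam2) ^ 2) := by
    field_simp
    linarith [hS]
  have hPval : π20 = lam1 ^ 2 / (2 * μ ^ 2 + 2 * μ * lam1 + lam1 ^ 2) := by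
    field_simp
    linarith [hP]
  have h11 : π11 + π02 = (lam1 + lam2) ^ 2 / (2 * μ ^ 2 + 2 * μ * (lam1 + lam2) + (lam1 + lam2) ^ 2)
      - lam1 ^ 2 / (2 * μ ^ 2 + 2 * μ * lam1 + lam1 ^ 2) := by
    linarith [hSval, hPval]
  rw [hSval, h11]
  unfold E2
  have h5 : (0:ℝ) < 1 + (lam1 / μ + lam2 / μ) + (lam1 / μ + lam2 / μ) ^ 2 / 2 := by positivity
  have h6 : (0:ℝ) < 1 + lam1 / μ + (lam1 / μ) ^ 2 / 2 := by positivity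
  field_simp
  ring
end

section
/- In the k-server, 2-priority preemptive loss system, the aggregate process (total number of busy servers) determined by the stationary distribution satisfies ∑_{i+j=n} π_{i,j} = ((A_1+A_2)^n/n!) / (∑_{m=0}^k (A_1+A_2)^m/m!) for every 0 ≤ n ≤ k, given that the π_{i,j} satisfy the global balance equations. -/
open Finset

private lemma diag_sum_aux (f : ℕ → ℕ → ℝ) (K : ℕ) :
    ∑ i ∈ range (K+1), ∑ j ∈ range (K+1-i), f i j
      = ∑ n ∈ range (K+1), ∑ i ∈ range (n+1), f i (n-i) := by
  induction K with
  | zero => simp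
  | succ K ih =>
    have h1 : ∀ i ∈ range (K+2), ∑ j ∈ range (K+2-i), f i j
        = ∑ j ∈ range (K+1-i), f i j + f i (K+1-i) := by
      intro i hi
      have hi' : i ≤ K + 1 := by simpa [Nat.lt_succ_iff] using mem_range.mp hi
      have h : K+2-i = (K+1-i)+1 := by omega
      rw [h, Finset.sum_range_succ]
    rw [Finset.sum_congr rfl h1, Finset.sum_add_distrib,
      Finset.sum_range_succ (fun i => ∑ j ∈ range (K+1-i), f i j), ih,
      Finset.sum_range_succ (fun n => ∑ i ∈ range (n+1), f i (n-i))]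
    simp
    conv_lhs => rw [show K+2 = K+1+1 from rfl]
    conv_rhs => rw [Finset.sum_range_succ, Finset.sum_range_succ]

theorem kserver_two_priority_aggregate (k : ℕ) (hk : 1 ≤ k) (lam1 lam2 mu : ℝ)
    (hlam1 : 0 < lam1) (hlam2 : 0 < lam2) (hmu : 0 < mu)
    (π : ℤ → ℤ → ℝ)
    (hzero : ∀ i j : ℤ, (i < 0 ∨ j < 0 ∨ (k : ℤ) < i + j) → π i j = 0)
    (hnc : ∀ i j : ℤ, 0 ≤ i → 0 ≤ j → i + j < (k : ℤ) →
      π i j * (lam1 + lam2 + ((i + j : ℤ) : ℝ) * mu) =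
        lam1 * π (i - 1) j + lam2 * π i (j - 1) +
          ((i + 1 : ℤ) : ℝ) * mu * π (i + 1) j + ((j + 1 : ℤ) : ℝ) * mu * π i (j + 1))
    (ht1 : ∀ i j : ℤ, 0 ≤ i → 0 ≤ j → i + j = (k : ℤ) → i < (k : ℤ) →
      π i j * (lam1 + (k : ℝ) * mu) =
        lam1 * π (i - 1) j + lam2 * π i (j - 1) + lam2 * π (i - 1) (j + 1))
    (ht2 : (k : ℝ) * mu * π (k : ℤ) 0 = lam1 * π ((k : ℤ) - 1) 1 + lam1 * π ((k : ℤ) - 1) 0)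
    (hnorm : ∑ i ∈ Finset.range (k + 1), ∑ j ∈ Finset.range (k + 1 - i), π (i : ℤ) (j : ℤ) = 1) :
    ∀ n ≤ k, ∑ i ∈ Finset.range (n + 1), π (i : ℤ) ((n : ℤ) - (i : ℤ)) =
      ((lam1 / mu + lam2 / mu) ^ n / (Nat.factorial n : ℝ)) /
        ∑ m ∈ Finset.range (k + 1), (lam1 / mu + lam2 / mu) ^ m / (Nat.factorial m : ℝ) := by
  set S : ℕ → ℝ := fun n => ∑ i ∈ Finset.range (n + 1), π (i : ℤ) ((n : ℤ) - (i : ℤ)) with hSdef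
  -- level balance at level m < k
  have hlevel : ∀ m : ℕ, m < k →
      S m * (lam1 + lam2 + (m : ℝ) * mu)
        = (lam1 + lam2) * (∑ i ∈ range m, π (i : ℤ) ((m : ℤ) - 1 - i))
          + ((m : ℝ) + 1) * mu * S (m + 1) := by
    intro m hm
    have hsum : S m * (lam1 + lam2 + (m : ℝ) * mu)
        = ∑ i ∈ range (m+1), (lam1 * π ((i : ℤ) - 1) ((m : ℤ) - i)
            + lam2 * π (i : ℤ) ((m : ℤ) - i - 1)
            + ((i : ℝ) + 1) * mu * π ((i : ℤ) + 1) ((m : ℤ) - i)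
            + (((m : ℝ) - i) + 1) * mu * π (i : ℤ) ((m : ℤ) - i + 1)) := by
      rw [hSdef]
      simp only []
      rw [Finset.sum_mul]
      refine Finset.sum_congr rfl ?_
      intro i hi
      have hi' : (i : ℤ) ≤ (m : ℤ) := by
        exact_mod_cast Nat.lt_succ_iff.mp (mem_range.mp hi)
      have h := hnc (i : ℤ) ((m : ℤ) - i) (by positivity) (by omega)
        (by push_cast; omega)
      have e1 : (i : ℤ) + ((m : ℤ) - i) = (m : ℤ) := by ring
      rw [e1] at h
      push_cast at h ⊢
      linarith [h]
    have hA1 : ∑ i ∈ range (m+1), lam1 * π ((i : ℤ) - 1) ((m : ℤ) - i)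
        = lam1 * ∑ i ∈ range m, π (i : ℤ) ((m : ℤ) - 1 - i) := by
      rw [Finset.mul_sum, Finset.sum_range_succ']
      have h0 : lam1 * π (((0:ℕ) : ℤ) - 1) ((m : ℤ) - ((0:ℕ) : ℤ)) = 0 := by
        rw [hzero _ _ (Or.inl (by norm_num))]; ring
      rw [h0, add_zero]
      refine Finset.sum_congr rfl ?_
      intro i _
      have e1 : (((i+1 : ℕ)) : ℤ) - 1 = (i : ℤ) := by push_cast; ring
      have e2 : (m : ℤ) - (((i+1 : ℕ)) : ℤ) = (m : ℤ) - 1 - i := by push_cast; ring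
      rw [e1, e2]
    have hA2 : ∑ i ∈ range (m+1), lam2 * π (i : ℤ) ((m : ℤ) - i - 1)
        = lam2 * ∑ i ∈ range m, π (i : ℤ) ((m : ℤ) - 1 - i) := by
      rw [Finset.mul_sum, Finset.sum_range_succ]
      have h0 : lam2 * π ((m : ℕ) : ℤ) ((m : ℤ) - ((m:ℕ) : ℤ) - 1) = 0 := by
        rw [hzero _ _ (Or.inr (Or.inl (by omega)))]; ring
      rw [h0, add_zero]
      refine Finset.sum_congr rfl ?_
      intro i _
      have e2 : (m : ℤ) - (i : ℤ) - 1 = (m : ℤ) - 1 - i := by ring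
      rw [e2]
    have hA3 : ∑ i ∈ range (m+1), ((i : ℝ) + 1) * mu * π ((i : ℤ) + 1) ((m : ℤ) - i)
        = ∑ i ∈ range (m+2), (i : ℝ) * mu * π (i : ℤ) ((m : ℤ) + 1 - i) := by
      rw [Finset.sum_range_succ' (fun i => (i : ℝ) * mu * π (i : ℤ) ((m : ℤ) + 1 - i)) (m+1)]
      have h0 : ((0:ℕ) : ℝ) * mu * π ((0:ℕ) : ℤ) ((m : ℤ) + 1 - ((0:ℕ):ℤ)) = 0 := by
        norm_num
      rw [h0, add_zero]
      refine Finset.sum_congr rfl ?_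
      intro i _
      push_cast
      have e2 : (m : ℤ) + 1 - ((i : ℤ) + 1) = (m : ℤ) - i := by ring
      rw [e2]
    have hA4 : ∑ i ∈ range (m+1), (((m : ℝ) - i) + 1) * mu * π (i : ℤ) ((m : ℤ) - i + 1)
        = ∑ i ∈ range (m+2), ((m : ℝ) + 1 - i) * mu * π (i : ℤ) ((m : ℤ) + 1 - i) := by
      rw [Finset.sum_range_succ (fun i => ((m : ℝ) + 1 - i) * mu * π (i : ℤ) ((m : ℤ) + 1 - i)) (m+1)]
      have h0 : ((m : ℝ) + 1 - ((m+1 : ℕ) : ℝ)) * mu * π (((m+1:ℕ)) : ℤ) ((m : ℤ) + 1 - ((m+1:ℕ) : ℤ)) = 0 := by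
        push_cast
        ring_nf
      rw [h0, add_zero]
      refine Finset.sum_congr rfl ?_
      intro i _
      have e2 : (m : ℤ) - (i : ℤ) + 1 = (m : ℤ) + 1 - i := by ring
      rw [e2]
      ring
    have hA34 : (∑ i ∈ range (m+2), (i : ℝ) * mu * π (i : ℤ) ((m : ℤ) + 1 - i))
        + (∑ i ∈ range (m+2), ((m : ℝ) + 1 - i) * mu * π (i : ℤ) ((m : ℤ) + 1 - i))
        = ((m : ℝ) + 1) * mu * S (m + 1) := by
      rw [hSdef]
      simp only []
      rw [← Finset.sum_add_distrib, Finset.mul_sum]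
      refine Finset.sum_congr rfl ?_
      intro i _
      have e : (((m+1 : ℕ)) : ℤ) - (i : ℤ) = (m : ℤ) + 1 - i := by push_cast; ring
      rw [e]
      ring
    calc S m * (lam1 + lam2 + (m : ℝ) * mu)
        = ∑ i ∈ range (m+1), (lam1 * π ((i : ℤ) - 1) ((m : ℤ) - i)
            + lam2 * π (i : ℤ) ((m : ℤ) - i - 1)
            + ((i : ℝ) + 1) * mu * π ((i : ℤ) + 1) ((m : ℤ) - i)
            + (((m : ℝ) - i) + 1) * mu * π (i : ℤ) ((m : ℤ) - i + 1)) := hsum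
      _ = (∑ i ∈ range (m+1), lam1 * π ((i : ℤ) - 1) ((m : ℤ) - i))
          + (∑ i ∈ range (m+1), lam2 * π (i : ℤ) ((m : ℤ) - i - 1))
          + (∑ i ∈ range (m+1), ((i : ℝ) + 1) * mu * π ((i : ℤ) + 1) ((m : ℤ) - i))
          + (∑ i ∈ range (m+1), (((m : ℝ) - i) + 1) * mu * π (i : ℤ) ((m : ℤ) - i + 1)) := by
          simp [Finset.sum_add_distrib]
      _ = (lam1 + lam2) * (∑ i ∈ range m, π (i : ℤ) ((m : ℤ) - 1 - i))
          + ((m : ℝ) + 1) * mu * S (m + 1) := by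
          rw [hA1, hA2, hA3, hA4]
          rw [add_assoc, hA34]
          ring
  -- cut balance
  have hcut : ∀ n : ℕ, n < k → (lam1 + lam2) * S n = ((n : ℝ) + 1) * mu * S (n + 1) := by
    intro n
    induction n with
    | zero =>
      intro h0
      have h := hlevel 0 h0
      simp at h
      norm_num
      linear_combination h
    | succ n ih =>
      intro h
      have ihh := ih (by omega)
      have h2 := hlevel (n+1) h
      have hprev : (∑ i ∈ range (n+1), π (i : ℤ) (((n+1 : ℕ) : ℤ) - 1 - i)) = S n := by
        rw [hSdef]
        simp only []
        refine Finset.sum_congr rfl ?_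
        intro i _
        have e : ((n+1 : ℕ) : ℤ) - 1 - (i : ℤ) = (n : ℤ) - i := by push_cast; ring
        rw [e]
      rw [hprev] at h2
      push_cast at h2 ⊢
      linear_combination h2 + ihh
  -- product formula
  have hS0 : ∀ n : ℕ, n ≤ k →
      S n = (lam1 / mu + lam2 / mu) ^ n / (Nat.factorial n : ℝ) * S 0 := by
    intro n
    induction n with
    | zero => intro _; simp
    | succ n ih =>
      intro h
      have hn : n < k := by omega
      have ihh := ih (le_of_lt hn)
      have hc := hcut n hn
      have hmun : ((n : ℝ) + 1) * mu ≠ 0 := by positivity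
      have : S (n+1) = (lam1 + lam2) * S n / (((n : ℝ) + 1) * mu) := by
        field_simp at hc ⊢
        linarith [hc]
      rw [this, ihh]
      rw [Nat.factorial_succ]
      push_cast
      have hmu0 : mu ≠ 0 := ne_of_gt hmu
      field_simp
      have hmd : mu * ((lam1 + lam2) / mu) = lam1 + lam2 := mul_div_cancel₀ _ hmu0
      linear_combination (-(S 0 * ((lam1 + lam2) / mu) ^ n)) * hmd
  -- normalization
  have hD : ∑ n ∈ range (k+1), S n = 1 := by
    rw [← hnorm, diag_sum_aux (fun i j => π (i : ℤ) (j : ℤ)) k]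
    refine Finset.sum_congr rfl ?_
    intro n hn
    rw [hSdef]
    simp only []
    refine Finset.sum_congr rfl ?_
    intro i hi
    have hi' : i ≤ n := Nat.lt_succ_iff.mp (mem_range.mp hi)
    have e : ((n - i : ℕ) : ℤ) = (n : ℤ) - i := by
      omega
    rw [e]
  set A : ℝ := lam1 / mu + lam2 / mu with hA
  have hApos : 0 < A := by positivity
  set D : ℝ := ∑ m ∈ range (k+1), A ^ m / (Nat.factorial m : ℝ) with hDdef
  have hDpos : 0 < D := by
    apply Finset.sum_pos
    · intro m _
      positivity
    · exact ⟨0, mem_range.mpr (by omega)⟩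
  have hSD : S 0 * D = 1 := by
    rw [← hD, hDdef, Finset.mul_sum]
    refine Finset.sum_congr rfl ?_
    intro n hn
    rw [hS0 n (Nat.lt_succ_iff.mp (mem_range.mp hn))]
    ring
  have hDne : D ≠ 0 := ne_of_gt hDpos
  have hS0val : S 0 = 1 / D := by
    field_simp
    linarith [hSD]
  intro n hn
  show S n = A ^ n / (Nat.factorial n : ℝ) / D
  rw [hS0 n hn, hS0val]
  ring
end
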